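/- Let A be an integral domain over ℂ and λ ∈ ℤ with λ ≠ -1. Set u(z) = 1 + z^{-λ} if λ < -1 and u(z) = 1 + z^{-λ-2} if λ > -1, and v(z) = z^{-λ-1}. Then for all m ≥ 1, the coefficient of z^{-λ-1} in u(z)^m is 0, while the coefficient of z^{-λ-1} in u(z)^m·v(z) is 1. Consequently u^m ∈ Im Φ_λ but u^m v ∉ Im Φ_λ for all m ≥ 1, so Im Φ_λ = {g : [z^{-λ-1}]g = 0} is not a Mathieu subspace of A[z, z⁻¹]. -/

import Mathlib

open LaurentPolynomial

lemma aux_coeff {A : Type*} [CommRing A] (k t : ℤ) (h : ∀ i : ℕ, (i : ℤ) * k ≠ t) (m : ℕ) :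
    (((1 + T k : LaurentPolynomial A)) ^ m).coeff t = 0 := by
  rw [add_comm, add_pow, AddMonoidAlgebra.coeff_sum, Finsupp.finset_sum_apply]
  apply Finset.sum_eq_zero
  intro i _
  rw [T_pow, one_pow, mul_one, ← map_natCast (C : A →+* LaurentPolynomial A),
      mul_comm, ← single_eq_C_mul_T, AddMonoidAlgebra.coeff_single, Finsupp.single_apply, if_neg (h i)]

lemma aux_coeff0 {A : Type*} [CommRing A] (k : ℤ) (hk : k ≠ 0) (m : ℕ) :
    (((1 + T k : LaurentPolynomial A)) ^ m).coeff 0 = 1 := by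
  rw [add_comm, add_pow, AddMonoidAlgebra.coeff_sum, Finsupp.finset_sum_apply]
  rw [Finset.sum_eq_single 0]
  · rw [pow_zero, one_mul, one_pow, one_mul, ← map_natCast (C : A →+* LaurentPolynomial A),
      ← mul_one ((C : A →+* LaurentPolynomial A) _), ← T_zero, ← single_eq_C_mul_T,
      AddMonoidAlgebra.coeff_single, Finsupp.single_apply, if_pos rfl]
    simp
  · intro i _ hi
    rw [T_pow, one_pow, mul_one, ← map_natCast (C : A →+* LaurentPolynomial A),
        mul_comm, ← single_eq_C_mul_T, AddMonoidAlgebra.coeff_single, Finsupp.single_apply, if_neg]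
    intro hc
    exact hi (by exact_mod_cast (mul_eq_zero.mp hc).resolve_right hk)
  · intro h; simp at h

lemma aux_mul_T_apply {A : Type*} [CommRing A] (p : LaurentPolynomial A) (x y : ℤ) :
    (p * T x : AddMonoidAlgebra A ℤ).coeff y = p.coeff (y - x) := by
  rw [show (T x : LaurentPolynomial A) = AddMonoidAlgebra.single x 1 from rfl,
    AddMonoidAlgebra.coeff_mul_single_apply, mul_one, sub_eq_add_neg]

/-- for `λ ∈ ℤ`, `λ ≠ -1`, with `u = 1 + z^(-λ)` (if `λ < -1`) or
`u = 1 + z^(-λ-2)` (if `λ > -1`) and `v = z^(-λ-1)`, the coefficient of `z^(-λ-1)`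
in `u^m` is `0` while in `u^m * v` it is `1`, for every `m ≥ 1`.  Consequently the
set `{g : [z^(-λ-1)]g = 0}` (which is `Im Φ_λ`) is not a Mathieu subspace of
`A[z,z⁻¹]`. -/
theorem stmt15 {A : Type*} [CommRing A] [IsDomain A] [Algebra ℂ A]
    (lam : ℤ) (hlam : lam ≠ -1)
    (u v : LaurentPolynomial A)
    (hu : u = if lam < -1 then 1 + T (-lam) else 1 + T (-lam - 2))
    (hv : v = T (-lam - 1)) :
    (∀ m : ℕ, 1 ≤ m → (u ^ m).coeff (-lam - 1) = 0) ∧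
    (∀ m : ℕ, 1 ≤ m → (u ^ m * v).coeff (-lam - 1) = 1) ∧
    ¬ (∀ a b : LaurentPolynomial A,
        (∀ m : ℕ, 1 ≤ m → (a ^ m).coeff (-lam - 1) = 0) →
        ∃ N : ℕ, ∀ m : ℕ, N ≤ m → (a ^ m * b).coeff (-lam - 1) = 0) := by
  set k : ℤ := if lam < -1 then -lam else -lam - 2 with hk
  have hu' : u = 1 + T k := by
    rw [hu, hk]; split <;> rfl
  have hkt : ∀ i : ℕ, (i : ℤ) * k ≠ -lam - 1 := by
    intro i
    rcases i with _ | n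
    · simp only [Nat.cast_zero, zero_mul]
      omega
    · rw [hk]
      split
      · have h1 : 0 ≤ (n : ℤ) * (-lam) := mul_nonneg (by positivity) (by omega)
        push_cast
        nlinarith
      · have h1 : (n : ℤ) * (-lam - 2) ≤ 0 :=
          mul_nonpos_of_nonneg_of_nonpos (by positivity) (by omega)
        push_cast
        nlinarith
  have hk0 : k ≠ 0 := by rw [hk]; split <;> omega
  have h1 : ∀ m : ℕ, 1 ≤ m → (u ^ m).coeff (-lam - 1) = 0 := by
    intro m _
    rw [hu']
    exact aux_coeff k _ hkt m
  have h2 : ∀ m : ℕ, 1 ≤ m → (u ^ m * v).coeff (-lam - 1) = 1 := by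
    intro m _
    rw [hv, aux_mul_T_apply, sub_self, hu']
    exact aux_coeff0 k hk0 m
  refine ⟨h1, h2, fun H => ?_⟩
  obtain ⟨N, hN⟩ := H u v h1
  have := hN (max N 1) (le_max_left _ _)
  rw [h2 (max N 1) (le_max_right _ _)] at this
  exact one_ne_zero this
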